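/- Let n ≥ 1, let G and H be finite subgroups of GL(n, ℝ) acting on ℝⁿ by matrix–vector multiplication, and let Θ : G → H be a group isomorphism. Let f : ℝⁿ → ℝⁿ be a bijection such that f and f⁻¹ are continuously differentiable, with f(0) = 0 and f(γ·x) = Θ(γ)·f(x) for all γ ∈ G and x ∈ ℝⁿ. Let V_G = {v ∈ ℝⁿ : γ·v = v for all γ ∈ G} and V_H = {v ∈ ℝⁿ : μ·v = v for all μ ∈ H} be the fixed subspaces. Then the differential Df(0) maps V_G into V_H, and dim V_G = dim V_H. -/

import Mathlib

/-- The subspace of vectors of ℝⁿ fixed by every element of a subgroup `G` of GL(n,ℝ)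
acting by matrix–vector multiplication. -/
noncomputable def fixedSubspace (n : ℕ) (G : Subgroup (GL (Fin n) ℝ)) :
    Submodule ℝ (Fin n → ℝ) :=
  ⨅ γ : G, LinearMap.eqLocus
    (Matrix.mulVecLin (((γ : GL (Fin n) ℝ)) : Matrix (Fin n) (Fin n) ℝ)) LinearMap.id

lemma mem_fixedSubspace_iff (n : ℕ) (G : Subgroup (GL (Fin n) ℝ)) (v : Fin n → ℝ) :
    v ∈ fixedSubspace n G ↔ ∀ γ : G,
      Matrix.mulVec (((γ : GL (Fin n) ℝ)) : Matrix (Fin n) (Fin n) ℝ) v = v := by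
  simp [fixedSubspace, Submodule.mem_iInf, LinearMap.mem_eqLocus]

/-- Auxiliary: the differential at 0 of an equivariant differentiable map fixing 0
maps the fixed subspace of `G` into the fixed subspace of `H`. -/
lemma aux_maps (n : ℕ) (G H : Subgroup (GL (Fin n) ℝ))
    (Θ : G ≃* H) (f : (Fin n → ℝ) → (Fin n → ℝ))
    (hfd : Differentiable ℝ f) (hf0 : f 0 = 0)
    (hequiv : ∀ (γ : G) (x : Fin n → ℝ),
      f (Matrix.mulVec (((γ : GL (Fin n) ℝ)) : Matrix (Fin n) (Fin n) ℝ) x) =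
        Matrix.mulVec (((Θ γ : GL (Fin n) ℝ)) : Matrix (Fin n) (Fin n) ℝ) (f x)) :
    ∀ v ∈ fixedSubspace n G, fderiv ℝ f 0 v ∈ fixedSubspace n H := by
  intro v hv
  rw [mem_fixedSubspace_iff] at hv ⊢
  intro μ
  obtain ⟨γ, rfl⟩ := Θ.surjective μ
  set A : (Fin n → ℝ) →L[ℝ] (Fin n → ℝ) :=
    (Matrix.mulVecLin (((γ : GL (Fin n) ℝ)) : Matrix (Fin n) (Fin n) ℝ)).toContinuousLinearMap
  set B : (Fin n → ℝ) →L[ℝ] (Fin n → ℝ) :=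
    (Matrix.mulVecLin (((Θ γ : GL (Fin n) ℝ)) : Matrix (Fin n) (Fin n) ℝ)).toContinuousLinearMap
  have hAf : ⇑A = fun x => Matrix.mulVec (((γ : GL (Fin n) ℝ)) : Matrix (Fin n) (Fin n) ℝ) x := rfl
  have hBf : ⇑B = fun x => Matrix.mulVec (((Θ γ : GL (Fin n) ℝ)) : Matrix (Fin n) (Fin n) ℝ) x := rfl
  have hcomp : f ∘ ⇑A = ⇑B ∘ f := by
    funext x
    exact hequiv γ x
  have h1 : HasFDerivAt (f ∘ ⇑A) ((fderiv ℝ f 0).comp A) 0 := by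
    have := ((hfd (A 0)).hasFDerivAt).comp 0 A.hasFDerivAt
    simpa using this
  have h2 : HasFDerivAt (f ∘ ⇑A) (B.comp (fderiv ℝ f 0)) 0 := by
    rw [hcomp]
    have hB : HasFDerivAt (⇑B) B (f 0) := B.hasFDerivAt
    exact hB.comp 0 (hfd 0).hasFDerivAt
  have heq : (fderiv ℝ f 0).comp A = B.comp (fderiv ℝ f 0) := h1.unique h2
  have hv' : A v = v := hv γ
  have := congrArg (fun L => L v) heq
  simp only [ContinuousLinearMap.comp_apply] at this
  rw [hv'] at this
  exact this.symm

/-- A Θ-equivariant C¹ diffeomorphism of ℝⁿ fixing the origin maps the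
fixed subspace V_G of G into the fixed subspace V_H of H via its differential at 0,
and dim V_G = dim V_H. -/
theorem equivariant_diffeo_preserves_fixed_subspace
    (n : ℕ) (hn : 1 ≤ n) (G H : Subgroup (GL (Fin n) ℝ)) [Finite G] [Finite H]
    (Θ : G ≃* H) (f finv : (Fin n → ℝ) → (Fin n → ℝ))
    (hf : ContDiff ℝ 1 f) (hfinv : ContDiff ℝ 1 finv)
    (hleft : Function.LeftInverse finv f) (hright : Function.RightInverse finv f)
    (hf0 : f 0 = 0)
    (hequiv : ∀ (γ : G) (x : Fin n → ℝ),
      f (Matrix.mulVec (((γ : GL (Fin n) ℝ)) : Matrix (Fin n) (Fin n) ℝ) x) =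
        Matrix.mulVec (((Θ γ : GL (Fin n) ℝ)) : Matrix (Fin n) (Fin n) ℝ) (f x)) :
    (∀ v ∈ fixedSubspace n G, fderiv ℝ f 0 v ∈ fixedSubspace n H) ∧
    Module.finrank ℝ (fixedSubspace n G) = Module.finrank ℝ (fixedSubspace n H) := by
  have hfd : Differentiable ℝ f := hf.differentiable one_ne_zero
  have hgd : Differentiable ℝ finv := hfinv.differentiable one_ne_zero
  have hg0 : finv 0 = 0 := by
    calc finv 0 = finv (f 0) := by rw [hf0]
    _ = 0 := hleft 0
  -- equivariance of finv w.r.t. Θ.symm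
  have hequiv' : ∀ (μ : H) (y : Fin n → ℝ),
      finv (Matrix.mulVec (((μ : GL (Fin n) ℝ)) : Matrix (Fin n) (Fin n) ℝ) y) =
        Matrix.mulVec (((Θ.symm μ : GL (Fin n) ℝ)) : Matrix (Fin n) (Fin n) ℝ) (finv y) := by
    intro μ y
    have h := hequiv (Θ.symm μ) (finv y)
    rw [Θ.apply_symm_apply, hright y] at h
    rw [← h, hleft]
  have part1 := aux_maps n G H Θ f hfd hf0 hequiv
  have part2 := aux_maps n H G Θ.symm finv hgd hg0 hequiv'
  refine ⟨part1, ?_⟩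
  -- fderiv finv 0 ∘ fderiv f 0 = id and conversely
  have hDgf : (fderiv ℝ finv 0).comp (fderiv ℝ f 0) = ContinuousLinearMap.id ℝ (Fin n → ℝ) := by
    have h1 : HasFDerivAt (finv ∘ f) ((fderiv ℝ finv 0).comp (fderiv ℝ f 0)) 0 := by
      have := ((hgd (f 0)).hasFDerivAt).comp 0 (hfd 0).hasFDerivAt
      rwa [hf0] at this
    have h2 : HasFDerivAt (finv ∘ f) (ContinuousLinearMap.id ℝ (Fin n → ℝ)) 0 := by
      have : finv ∘ f = id := funext hleft
      rw [this]
      exact hasFDerivAt_id 0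
    exact h1.unique h2
  have hDfg : (fderiv ℝ f 0).comp (fderiv ℝ finv 0) = ContinuousLinearMap.id ℝ (Fin n → ℝ) := by
    have h1 : HasFDerivAt (f ∘ finv) ((fderiv ℝ f 0).comp (fderiv ℝ finv 0)) 0 := by
      have := ((hfd (finv 0)).hasFDerivAt).comp 0 (hgd 0).hasFDerivAt
      rwa [hg0] at this
    have h2 : HasFDerivAt (f ∘ finv) (ContinuousLinearMap.id ℝ (Fin n → ℝ)) 0 := by
      have : f ∘ finv = id := funext hright
      rw [this]
      exact hasFDerivAt_id 0
    exact h1.unique h2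
  have hinjf : Function.Injective (fderiv ℝ f 0) := by
    intro a b hab
    have := congrArg (fderiv ℝ finv 0) hab
    simpa [← ContinuousLinearMap.comp_apply, hDgf] using this
  have hinjg : Function.Injective (fderiv ℝ finv 0) := by
    intro a b hab
    have := congrArg (fderiv ℝ f 0) hab
    simpa [← ContinuousLinearMap.comp_apply, hDfg] using this
  -- rank comparison
  have hle1 : Module.finrank ℝ (fixedSubspace n G) ≤ Module.finrank ℝ (fixedSubspace n H) := by
    have hmap : (fixedSubspace n G).map ((fderiv ℝ f 0) : (Fin n → ℝ) →ₗ[ℝ] (Fin n → ℝ)) ≤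
        fixedSubspace n H := by
      rintro _ ⟨v, hv, rfl⟩
      exact part1 v hv
    have := LinearEquiv.finrank_eq
      (Submodule.equivMapOfInjective ((fderiv ℝ f 0) : (Fin n → ℝ) →ₗ[ℝ] (Fin n → ℝ))
        hinjf (fixedSubspace n G))
    rw [this]
    exact Submodule.finrank_mono hmap
  have hle2 : Module.finrank ℝ (fixedSubspace n H) ≤ Module.finrank ℝ (fixedSubspace n G) := by
    have hmap : (fixedSubspace n H).map ((fderiv ℝ finv 0) : (Fin n → ℝ) →ₗ[ℝ] (Fin n → ℝ)) ≤
        fixedSubspace n G := by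
      rintro _ ⟨v, hv, rfl⟩
      exact part2 v hv
    have := LinearEquiv.finrank_eq
      (Submodule.equivMapOfInjective ((fderiv ℝ finv 0) : (Fin n → ℝ) →ₗ[ℝ] (Fin n → ℝ))
        hinjg (fixedSubspace n H))
    rw [this]
    exact Submodule.finrank_mono hmap
  exact le_antisymm hle1 hle2
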